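/- Fix η with 0 < η < 1 and weights w1, w2 with 0 < w1 < w2 and w1 + w2 = 1. Let r1, r2 ≥ 0 and suppose w2·(d2min(r1,r2))² ≤ w1·d12min(r1,r2) and w1·(d1min(r1,r2))² ≤ w2·d12min(r1,r2). Then the infimum of w1·D1 + w2·D2 over S(r1,r2) equals 2·√(w1·w2·d12min(r1,r2)), attained at the point (√(w2·d12min/w1), √(w1·d12min/w2)). -/

import Mathlib

/-- `d1min(r1,r2) = (η̄ + η·2^{−2r2})·2^{−2r1}`. -/
noncomputable def d1min (η r1 r2 : ℝ) : ℝ :=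
  ((1 - η) + η * (2 : ℝ) ^ (-2 * r2)) * (2 : ℝ) ^ (-2 * r1)

/-- `d2min(r1,r2) = (η̄ + η·2^{−2r1})·2^{−2r2}`. -/
noncomputable def d2min (η r1 r2 : ℝ) : ℝ :=
  ((1 - η) + η * (2 : ℝ) ^ (-2 * r1)) * (2 : ℝ) ^ (-2 * r2)

/-- `d12min(r1,r2) = (η̄ + η·2^{−2(r1+r2)})·2^{−2(r1+r2)}`. -/
noncomputable def d12min (η r1 r2 : ℝ) : ℝ :=
  ((1 - η) + η * (2 : ℝ) ^ (-2 * (r1 + r2))) * (2 : ℝ) ^ (-2 * (r1 + r2))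

/-- The feasible distortion set `S(r1,r2)`. -/
noncomputable def distSet (η r1 r2 : ℝ) : Set (ℝ × ℝ) :=
  {D | d1min η r1 r2 ≤ D.1 ∧ d2min η r1 r2 ≤ D.2 ∧ d12min η r1 r2 ≤ D.1 * D.2}

lemma amgm (x y : ℝ) (hx : 0 ≤ x) (hy : 0 ≤ y) : 2 * Real.sqrt (x * y) ≤ x + y := by
  nlinarith [sq_nonneg (Real.sqrt x - Real.sqrt y), Real.sq_sqrt hx, Real.sq_sqrt hy,
    Real.sqrt_mul hx y, Real.sqrt_nonneg x, Real.sqrt_nonneg y]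

lemma d12_pos (η r1 r2 : ℝ) (hη0 : 0 < η) (hη1 : η < 1) : 0 < d12min η r1 r2 := by
  unfold d12min
  exact mul_pos (add_pos (by linarith) (by positivity)) (by positivity)

lemma d1_pos (η r1 r2 : ℝ) (hη0 : 0 < η) (hη1 : η < 1) : 0 < d1min η r1 r2 := by
  unfold d1min
  exact mul_pos (add_pos (by linarith) (by positivity)) (by positivity)

lemma d2_pos (η r1 r2 : ℝ) (hη0 : 0 < η) (hη1 : η < 1) : 0 < d2min η r1 r2 := by
  unfold d2min
  exact mul_pos (add_pos (by linarith) (by positivity)) (by positivity)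

/-- The tangent ('curve MD') branch of Proposition 1 of the paper: if
`w2·(d2min)² ≤ w1·d12min` and `w1·(d1min)² ≤ w2·d12min`, then the infimum of
`w1·D1 + w2·D2` over `S(r1,r2)` equals `2·√(w1·w2·d12min)`, attained at
`(√(w2·d12min/w1), √(w1·d12min/w2))`. -/
theorem curveMD_branch (η w1 w2 r1 r2 : ℝ)
    (hη0 : 0 < η) (hη1 : η < 1)
    (hw0 : 0 < w1) (hw12 : w1 < w2) (hwsum : w1 + w2 = 1)
    (hr1 : 0 ≤ r1) (hr2 : 0 ≤ r2)
    (hMD : w2 * (d2min η r1 r2) ^ 2 ≤ w1 * d12min η r1 r2)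
    (hMD' : w1 * (d1min η r1 r2) ^ 2 ≤ w2 * d12min η r1 r2) :
    (Real.sqrt (w2 * d12min η r1 r2 / w1), Real.sqrt (w1 * d12min η r1 r2 / w2)) ∈
        distSet η r1 r2 ∧
    IsLeast ((fun D : ℝ × ℝ => w1 * D.1 + w2 * D.2) '' distSet η r1 r2)
      (2 * Real.sqrt (w1 * w2 * d12min η r1 r2)) := by
  have hw2 : 0 < w2 := lt_trans hw0 hw12
  set d := d12min η r1 r2 with hd
  have hdpos : 0 < d := d12_pos η r1 r2 hη0 hη1
  have hd1 : 0 < d1min η r1 r2 := d1_pos η r1 r2 hη0 hη1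
  have hd2 : 0 < d2min η r1 r2 := d2_pos η r1 r2 hη0 hη1
  have ha : d1min η r1 r2 ≤ Real.sqrt (w2 * d / w1) := by
    rw [Real.le_sqrt hd1.le]
    · rw [le_div_iff₀ hw0]; nlinarith
    · positivity
  have hb : d2min η r1 r2 ≤ Real.sqrt (w1 * d / w2) := by
    rw [Real.le_sqrt hd2.le]
    · rw [le_div_iff₀ hw2]; nlinarith
    · positivity
  have hab : Real.sqrt (w2 * d / w1) * Real.sqrt (w1 * d / w2) = d := by
    rw [← Real.sqrt_mul (by positivity)]
    have : w2 * d / w1 * (w1 * d / w2) = d ^ 2 := by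
      field_simp
    rw [this, Real.sqrt_sq hdpos.le]
  have hmem : (Real.sqrt (w2 * d / w1), Real.sqrt (w1 * d / w2)) ∈ distSet η r1 r2 := by
    refine ⟨ha, hb, ?_⟩
    rw [hab]
  refine ⟨hmem, ⟨⟨_, hmem, ?_⟩, ?_⟩⟩
  · show w1 * Real.sqrt (w2 * d / w1) + w2 * Real.sqrt (w1 * d / w2) = _
    have h1 : w1 * Real.sqrt (w2 * d / w1) = Real.sqrt (w1 * w2 * d) := by
      rw [← Real.sqrt_sq hw0.le, ← Real.sqrt_mul (by positivity)]
      congr 1; field_simp; rw [Real.sq_sqrt (by positivity)]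
    have h2 : w2 * Real.sqrt (w1 * d / w2) = Real.sqrt (w1 * w2 * d) := by
      rw [← Real.sqrt_sq hw2.le, ← Real.sqrt_mul (by positivity)]
      congr 1; field_simp; rw [Real.sq_sqrt (by positivity)]
    rw [h1, h2]; ring
  · rintro v ⟨⟨D1, D2⟩, ⟨h1, h2, h12⟩, rfl⟩
    simp only at h1 h2 h12 ⊢
    have hD1 : 0 ≤ D1 := le_trans hd1.le h1
    have hD2 : 0 ≤ D2 := le_trans hd2.le h2
    have h12' : d ≤ D1 * D2 := h12
    have hle : w1 * w2 * d ≤ (w1 * D1) * (w2 * D2) := by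
      nlinarith [mul_le_mul_of_nonneg_left h12' (mul_nonneg hw0.le hw2.le)]
    have hs := Real.sqrt_le_sqrt hle
    have := amgm (w1 * D1) (w2 * D2) (by positivity) (by positivity)
    linarith
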